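/- Let Σ be a triangulation in ℝⁿ and let C, D be Σ-definable polyhedra (unions of face-closed subsets of Σ). Then cl(C \ D) is again a Σ-definable polyhedron; consequently the Σ-definable polyhedra form a co-Heyting subalgebra of the co-Heyting algebra of closed subsets of |Σ|. -/

import Mathlib

open Set

/-- A polytope in ℝⁿ: the convex hull of a finite set of points. -/
def IsPolytope {n : ℕ} (s : Set (Fin n → ℝ)) : Prop :=
  ∃ V : Finset (Fin n → ℝ), s = convexHull ℝ (V : Set (Fin n → ℝ))

/-- A polyhedron in ℝⁿ: a finite union of polytopes. -/
def IsPolyhedron {n : ℕ} (P : Set (Fin n → ℝ)) : Prop :=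
  ∃ S : Set (Set (Fin n → ℝ)), S.Finite ∧ (∀ s ∈ S, IsPolytope s) ∧ P = ⋃₀ S

/-- A simplex in ℝⁿ: the convex hull of a nonempty finite affinely independent set. -/
def IsSimplex {n : ℕ} (s : Set (Fin n → ℝ)) : Prop :=
  ∃ V : Finset (Fin n → ℝ), V.Nonempty ∧
    AffineIndependent ℝ (fun x : {x : Fin n → ℝ // x ∈ V} => x.val) ∧
    s = convexHull ℝ (V : Set (Fin n → ℝ))

/-- `IsFaceOf s t`: `t` is a simplex with vertex set `W` and `s` is the convex hull
of a nonempty subset of `W`. -/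
def IsFaceOf {n : ℕ} (s t : Set (Fin n → ℝ)) : Prop :=
  ∃ W V : Finset (Fin n → ℝ), W.Nonempty ∧
    AffineIndependent ℝ (fun x : {x : Fin n → ℝ // x ∈ W} => x.val) ∧
    t = convexHull ℝ (W : Set (Fin n → ℝ)) ∧
    V.Nonempty ∧ V ⊆ W ∧ s = convexHull ℝ (V : Set (Fin n → ℝ))

/-- A triangulation in ℝⁿ: a finite set of simplices closed under taking faces, such that
any two members intersect in a common face (or not at all). -/
structure IsTriangulation {n : ℕ} (K : Set (Set (Fin n → ℝ))) : Prop where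
  finite : K.Finite
  simplex : ∀ s ∈ K, IsSimplex s
  face_mem : ∀ s ∈ K, ∀ t, IsFaceOf t s → t ∈ K
  inter : ∀ s ∈ K, ∀ t ∈ K, s ∩ t = ∅ ∨ (IsFaceOf (s ∩ t) s ∧ IsFaceOf (s ∩ t) t)

/-- A set of simplices closed under taking faces. -/
def FaceClosed {n : ℕ} (D : Set (Set (Fin n → ℝ))) : Prop :=
  ∀ s ∈ D, ∀ t, IsFaceOf t s → t ∈ D

/-- A `K`-definable polyhedron: the union of a face-closed subset of `K`. -/
def SigmaDefinable {n : ℕ} (K : Set (Set (Fin n → ℝ))) (C : Set (Fin n → ℝ)) : Prop :=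
  ∃ D ⊆ K, FaceClosed D ∧ C = ⋃₀ D

/-- A `K`-definable open set: the complement in `|K| = ⋃₀ K` of a `K`-definable polyhedron. -/
def SigmaDefOpen {n : ℕ} (K : Set (Set (Fin n → ℝ))) (O : Set (Fin n → ℝ)) : Prop :=
  ∃ C, SigmaDefinable K C ∧ O = ⋃₀ K \ C

/-- The open star of a simplex `s` in a triangulation `K`. -/
def openStar {n : ℕ} (K : Set (Set (Fin n → ℝ))) (s : Set (Fin n → ℝ)) : Set (Fin n → ℝ) :=
  ⋃ t ∈ {t ∈ K | s ⊆ t}, intrinsicInterior ℝ t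

/-- The interior of `S` in the subspace topology of `P`, viewed as a subset of ℝⁿ. -/
def intSub {n : ℕ} (P S : Set (Fin n → ℝ)) : Set (Fin n → ℝ) :=
  Subtype.val '' interior (Subtype.val ⁻¹' S : Set P)

/-- An open subpolyhedron of a polyhedron `P`: a subset of `P` whose complement in `P`
is a polyhedron. -/
def IsOpenSubpoly {n : ℕ} (P O : Set (Fin n → ℝ)) : Prop :=
  O ⊆ P ∧ IsPolyhedron (P \ O)

/-- `s` is a simplex with exactly `k` (affinely independent) vertices. -/
def SimplexWithCard {n : ℕ} (s : Set (Fin n → ℝ)) (k : ℕ) : Prop :=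
  ∃ V : Finset (Fin n → ℝ), V.Nonempty ∧
    AffineIndependent ℝ (fun x : {x : Fin n → ℝ // x ∈ V} => x.val) ∧
    s = convexHull ℝ (V : Set (Fin n → ℝ)) ∧ V.card = k

/-- `P` contains a simplex with `d+1` affinely independent vertices, and no simplex with more;
i.e. the polyhedron `P` has dimension exactly `d`. -/
def PolyDimEq {n : ℕ} (P : Set (Fin n → ℝ)) (d : ℕ) : Prop :=
  (∃ V : Finset (Fin n → ℝ), V.Nonempty ∧
      AffineIndependent ℝ (fun x : {x : Fin n → ℝ // x ∈ V} => x.val) ∧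
      convexHull ℝ (V : Set (Fin n → ℝ)) ⊆ P ∧ V.card = d + 1) ∧
  (∀ V : Finset (Fin n → ℝ),
      AffineIndependent ℝ (fun x : {x : Fin n → ℝ // x ∈ V} => x.val) →
      convexHull ℝ (V : Set (Fin n → ℝ)) ⊆ P → V.card ≤ d + 1)

/-- The polyhedron `P` has dimension at most `d`. -/
def PolyDimLE {n : ℕ} (P : Set (Fin n → ℝ)) (d : ℕ) : Prop :=
  ∀ V : Finset (Fin n → ℝ),
    AffineIndependent ℝ (fun x : {x : Fin n → ℝ // x ∈ V} => x.val) →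
    convexHull ℝ (V : Set (Fin n → ℝ)) ⊆ P → V.card ≤ d + 1

/-- The triangulation `K` has combinatorial dimension exactly `d`. -/
def TriangDimEq {n : ℕ} (K : Set (Set (Fin n → ℝ))) (d : ℕ) : Prop :=
  (∃ s ∈ K, SimplexWithCard s (d + 1)) ∧
  (∀ s ∈ K, ∀ k, SimplexWithCard s k → k ≤ d + 1)

/-- The bounded-depth terms: `bdTerm P k V = V k ∪ (V k ⇨ bdTerm P (k-1) V)`,
where `U ⇨ W = int_P ((P \ U) ∪ W)` is the Heyting implication of open subsets of `P`. -/
def bdTerm {n : ℕ} (P : Set (Fin n → ℝ)) :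
    (k : ℕ) → (Fin (k + 1) → Set (Fin n → ℝ)) → Set (Fin n → ℝ)
  | 0, V => V 0 ∪ intSub P (P \ V 0)
  | k + 1, V => V (Fin.last (k + 1)) ∪
      intSub P ((P \ V (Fin.last (k + 1))) ∪ bdTerm P k (fun i => V i.castSucc))

/-- The finite poset `A` has depth exactly `d`: it has a chain of cardinality `d+1`
and no longer chain. -/
def depthEq (A : Type) [PartialOrder A] (d : ℕ) : Prop :=
  (∃ C : Finset A, IsChain (· ≤ ·) (C : Set A) ∧ C.card = d + 1) ∧
  (∀ C : Finset A, IsChain (· ≤ ·) (C : Set A) → C.card ≤ d + 1)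

/-- An upper set of the poset `(K, ⊆)`. -/
def UpperSetOf {n : ℕ} (K U : Set (Set (Fin n → ℝ))) : Prop :=
  U ⊆ K ∧ ∀ s ∈ U, ∀ t ∈ K, s ⊆ t → t ∈ U

/-- The map sending an upper set of a triangulation to the union of the relative
interiors of its members. -/
def gammaUp {n : ℕ} (U : Set (Set (Fin n → ℝ))) : Set (Fin n → ℝ) :=
  ⋃ s ∈ U, intrinsicInterior ℝ s

set_option maxHeartbeats 1000000

section Helpers
variable {n : ℕ}

lemma centerMass_subtype (W : Finset (Fin n → ℝ)) (w : (Fin n → ℝ) → ℝ)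
    (hw : ∑ y ∈ W, w y = 1) :
    Finset.univ.affineCombination ℝ (fun x : {x // x ∈ W} => x.val) (fun x => w x.val)
      = W.centerMass w id := by
  have hsum : ∑ x : {x // x ∈ W}, w x.val = 1 := by
    rw [Finset.sum_coe_sort W w]; exact hw
  rw [affineCombination_eq_centerMass hsum]
  unfold Finset.centerMass
  rw [hsum, hw]
  simp only [inv_one, one_smul]
  exact Finset.sum_coe_sort W (fun x => w x • x)

lemma bary_unique {W : Finset (Fin n → ℝ)}
    (hW : AffineIndependent ℝ (fun x : {x : Fin n → ℝ // x ∈ W} => x.val))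
    {w w' : (Fin n → ℝ) → ℝ} (h1 : ∑ y ∈ W, w y = 1) (h2 : ∑ y ∈ W, w' y = 1)
    (heq : W.centerMass w id = W.centerMass w' id) : ∀ y ∈ W, w y = w' y := by
  have h := hW.indicator_eq_of_affineCombination_eq Finset.univ Finset.univ
    (fun x => w x.val) (fun x => w' x.val)
    (by rw [Finset.sum_coe_sort W w]; exact h1)
    (by rw [Finset.sum_coe_sort W w']; exact h2)
    (by rw [centerMass_subtype W w h1, centerMass_subtype W w' h2]; exact heq)
  intro y hy
  have := congrFun h ⟨y, hy⟩
  simpa using this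

lemma centerMass_congr' {W : Finset (Fin n → ℝ)} {a d : (Fin n → ℝ) → ℝ}
    (h : ∀ u ∈ W, a u = d u) : W.centerMass a id = W.centerMass d id := by
  unfold Finset.centerMass
  rw [show W.sum a = W.sum d from Finset.sum_congr rfl h]
  congr 1
  exact Finset.sum_congr rfl fun u hu => by rw [h u hu]

lemma vertex_subset {W W' : Finset (Fin n → ℝ)}
    (hW : AffineIndependent ℝ (fun x : {x : Fin n → ℝ // x ∈ W} => x.val))
    (h : convexHull ℝ (W : Set (Fin n → ℝ)) = convexHull ℝ (W' : Set (Fin n → ℝ))) :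
    W ⊆ W' := by
  intro w hw
  have hwW' : w ∈ convexHull ℝ (W' : Set (Fin n → ℝ)) := by
    rw [← h]; exact subset_convexHull ℝ _ hw
  rw [Finset.convexHull_eq] at hwW'
  obtain ⟨b, hb0, hb1, hbc⟩ := hwW'
  have key : ∀ v : (Fin n → ℝ), ∃ a : (Fin n → ℝ) → ℝ, v ∈ W' →
      ((∀ y ∈ W, 0 ≤ a y) ∧ ∑ y ∈ W, a y = 1 ∧ W.centerMass a id = v) := by
    intro v
    by_cases hv : v ∈ W'
    · have : v ∈ convexHull ℝ (W : Set (Fin n → ℝ)) := by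
        rw [h]; exact subset_convexHull ℝ _ hv
      rw [Finset.convexHull_eq] at this
      obtain ⟨a, ha⟩ := this
      exact ⟨a, fun _ => ha⟩
    · exact ⟨0, fun hv' => absurd hv' hv⟩
  choose a ha using key
  set c : (Fin n → ℝ) → ℝ := fun u => ∑ v ∈ W', b v * a v u with hc
  have hc0 : ∀ u ∈ W, 0 ≤ c u := fun u hu =>
    Finset.sum_nonneg fun v hv => mul_nonneg (hb0 v hv) ((ha v hv).1 u hu)
  have hc1 : ∑ u ∈ W, c u = 1 := by
    rw [Finset.sum_comm]
    calc ∑ v ∈ W', ∑ u ∈ W, b v * a v u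
        = ∑ v ∈ W', b v := by
          refine Finset.sum_congr rfl fun v hv => ?_
          rw [← Finset.mul_sum, (ha v hv).2.1, mul_one]
      _ = 1 := hb1
  have hcc : W.centerMass c id = w := by
    rw [Finset.centerMass_eq_of_sum_1 _ _ hc1]
    have key2 : ∀ v ∈ W', ∑ u ∈ W, (b v * a v u) • u = b v • v := by
      intro v hv
      have hv' := (ha v hv).2.2
      rw [Finset.centerMass_eq_of_sum_1 _ _ (ha v hv).2.1] at hv'
      calc ∑ u ∈ W, (b v * a v u) • u = b v • ∑ u ∈ W, a v u • u := by
            rw [Finset.smul_sum]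
            exact Finset.sum_congr rfl fun u hu => (smul_smul _ _ _).symm
        _ = b v • v := by rw [show (∑ u ∈ W, a v u • u) = v from by simpa using hv']
    have hbc2 : ∑ v ∈ W', b v • id v = w := by
      rw [← Finset.centerMass_eq_of_sum_1 W' id hb1]; exact hbc
    have hbc' : ∑ v ∈ W', b v • v = w := by simpa using hbc2
    calc ∑ u ∈ W, c u • (id u) = ∑ u ∈ W, ∑ v ∈ W', (b v * a v u) • u := by
          simp [hc, Finset.sum_smul]
      _ = ∑ v ∈ W', ∑ u ∈ W, (b v * a v u) • u := Finset.sum_comm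
      _ = ∑ v ∈ W', b v • v := Finset.sum_congr rfl key2
      _ = w := hbc'
  set d : (Fin n → ℝ) → ℝ := fun u => if w = u then 1 else 0 with hd
  have hd1 : ∑ u ∈ W, d u = 1 := by
    rw [hd]; simp [Finset.sum_ite_eq, hw]
  have hdc : W.centerMass d id = w := by
    rw [Finset.centerMass_eq_of_sum_1 _ _ hd1, hd]
    simp [ite_smul, Finset.sum_ite_eq, hw]
  have huniq := bary_unique hW hc1 hd1 (by rw [hcc, hdc])
  -- find v0 with b v0 > 0
  have hex : ∃ v0 ∈ W', 0 < b v0 := by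
    by_contra hcon
    push_neg at hcon
    have : (1:ℝ) ≤ 0 := hb1 ▸ Finset.sum_nonpos hcon
    linarith
  obtain ⟨v0, hv0, hbv0⟩ := hex
  have hz : ∀ y ∈ W, w ≠ y → a v0 y = 0 := by
    intro y hy hwy
    have hcy : c y = 0 := by
      have := huniq y hy
      rw [hd] at this
      simpa [if_neg hwy] using this
    have hle : b v0 * a v0 y ≤ c y :=
      Finset.single_le_sum (fun v hv => mul_nonneg (hb0 v hv) ((ha v hv).1 y hy)) hv0
    nlinarith [(ha v0 hv0).1 y hy]
  have hagree : ∀ u ∈ W, a v0 u = d u := by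
    intro u hu
    by_cases huw : w = u
    · have hsum : ∑ y ∈ W, a v0 y = 1 := (ha v0 hv0).2.1
      have hsum2 : ∑ y ∈ W, a v0 y = a v0 u := by
        rw [← Finset.sum_subset (Finset.singleton_subset_iff.mpr hu)]
        · simp
        · intro y hy hys
          exact hz y hy (fun he => hys (by simp [← he, ← huw]))
      simp only [hd, if_pos huw]
      exact hsum2.symm.trans hsum
    · simp only [hd, if_neg huw]
      exact hz u hu huw
  have hv0w : v0 = w := ((ha v0 hv0).2.2).symm.trans ((centerMass_congr' hagree).trans hdc)
  exact hv0w ▸ hv0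

lemma vertex_unique {W W' : Finset (Fin n → ℝ)}
    (hW : AffineIndependent ℝ (fun x : {x : Fin n → ℝ // x ∈ W} => x.val))
    (hW' : AffineIndependent ℝ (fun x : {x : Fin n → ℝ // x ∈ W'} => x.val))
    (h : convexHull ℝ (W : Set (Fin n → ℝ)) = convexHull ℝ (W' : Set (Fin n → ℝ))) :
    W = W' :=
  Finset.Subset.antisymm (vertex_subset hW h) (vertex_subset hW' h.symm)

lemma dense_compl {W : Finset (Fin n → ℝ)}
    (hW : AffineIndependent ℝ (fun x : {x : Fin n → ℝ // x ∈ W} => x.val))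
    (hWne : W.Nonempty) (F : Set (Set (Fin n → ℝ)))
    (hprop : ∀ f ∈ F, ∃ V : Finset (Fin n → ℝ), V ⊆ W ∧ V ≠ W ∧
      f ⊆ convexHull ℝ (V : Set (Fin n → ℝ))) :
    convexHull ℝ (W : Set (Fin n → ℝ)) ⊆
      closure (convexHull ℝ (W : Set (Fin n → ℝ)) \ ⋃₀ F) := by
  intro x hx
  rw [Finset.convexHull_eq] at hx
  obtain ⟨a, ha0, ha1, hax⟩ := hx
  set N : ℝ := (W.card : ℝ) with hN
  have hN0 : 0 < N := by
    rw [hN]; exact_mod_cast Finset.card_pos.mpr hWne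
  set ε : ℕ → ℝ := fun m => 1 / (m + 1 : ℝ) with hε
  have hε0 : ∀ m, 0 < ε m := fun m => by positivity
  have hε1 : ∀ m, ε m ≤ 1 := by
    intro m
    rw [hε]
    rw [div_le_one (by positivity)]
    simp
  set wm : ℕ → (Fin n → ℝ) → ℝ :=
    fun m u => (1 - ε m) * a u + ε m * (1 / N) with hwm
  have hwmsum : ∀ m, ∑ u ∈ W, wm m u = 1 := by
    intro m
    simp only [hwm, Finset.sum_add_distrib, ← Finset.mul_sum, ha1, Finset.sum_const,
      nsmul_eq_mul]
    rw [show (W.card : ℝ) * (1 / N) = 1 from by rw [hN]; field_simp]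
    ring
  have hwmpos : ∀ m, ∀ u ∈ W, 0 < wm m u := by
    intro m u hu
    have h1 : 0 ≤ (1 - ε m) * a u := mul_nonneg (by linarith [hε1 m]) (ha0 u hu)
    have h2 : 0 < ε m * (1 / N) := mul_pos (hε0 m) (by positivity)
    simp only [hwm]; linarith
  set xm : ℕ → (Fin n → ℝ) := fun m => W.centerMass (wm m) id with hxm
  have hmem : ∀ m, xm m ∈ convexHull ℝ (W : Set (Fin n → ℝ)) \ ⋃₀ F := by
    intro m
    constructor
    · exact W.centerMass_id_mem_convexHull (fun u hu => (hwmpos m u hu).le)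
        (by rw [hwmsum m]; norm_num)
    · intro hmem
      obtain ⟨f, hf, hxf⟩ := hmem
      obtain ⟨V, hVW, hVne, hfV⟩ := hprop f hf
      have : xm m ∈ convexHull ℝ (V : Set (Fin n → ℝ)) := hfV hxf
      rw [Finset.convexHull_eq] at this
      obtain ⟨b, hb0, hb1, hbc⟩ := this
      classical
      set b' : (Fin n → ℝ) → ℝ := fun u => if u ∈ V then b u else 0 with hb'
      have hb'1 : ∑ u ∈ W, b' u = 1 := by
        rw [← Finset.sum_subset hVW (fun u _ hu => by simp [hb', hu])]
        rw [← hb1]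
        exact Finset.sum_congr rfl fun u hu => by simp [hb', hu]
      have hb'c : W.centerMass b' id = xm m := by
        rw [Finset.centerMass_eq_of_sum_1 _ _ hb'1]
        rw [← Finset.sum_subset hVW (fun u _ hu => by simp [hb', hu])]
        rw [Finset.centerMass_eq_of_sum_1 _ _ hb1] at hbc
        rw [← hbc]
        exact Finset.sum_congr rfl fun u hu => by simp [hb', hu]
      have huniq := bary_unique hW (hwmsum m) hb'1 (hb'c ▸ rfl)
      obtain ⟨u, huW, huV⟩ := Finset.exists_of_ssubset (ssubset_of_subset_of_ne hVW hVne)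
      have h1 := huniq u huW
      have h2 : b' u = 0 := by simp [hb', huV]
      have := hwmpos m u huW
      rw [h1, h2] at this
      exact lt_irrefl 0 this
  -- xm m → x
  have hseg : ∀ m, xm m = (1 - ε m) • x + ε m • W.centerMass (fun _ => 1 / N) id := by
    intro m
    rw [hxm, ← hax]
    exact (Finset.centerMass_segment W a (fun _ => 1 / N) id ha1
      (by rw [Finset.sum_const, nsmul_eq_mul, hN]; field_simp) _ _ (by ring)).symm
  have hεtend : Filter.Tendsto ε Filter.atTop (nhds 0) := by
    rw [hε]
    exact tendsto_one_div_add_atTop_nhds_zero_nat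
  have htend : Filter.Tendsto xm Filter.atTop (nhds x) := by
    have h1 : Filter.Tendsto (fun m => (1 - ε m) • x + ε m • W.centerMass (fun _ => 1 / N) id)
        Filter.atTop (nhds ((1 - (0:ℝ)) • x + (0:ℝ) • W.centerMass (fun _ => 1 / N) id)) := by
      exact ((tendsto_const_nhds.sub hεtend).smul tendsto_const_nhds).add
        (hεtend.smul tendsto_const_nhds)
    simp only [sub_zero, one_smul, zero_smul, add_zero] at h1
    simpa only [← hseg] using h1
  exact mem_closure_of_tendsto htend (Filter.Eventually.of_forall hmem)

lemma affineIndependent_finset_subset {V W : Finset (Fin n → ℝ)} (hVW : V ⊆ W)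
    (hW : AffineIndependent ℝ (fun x : {x : Fin n → ℝ // x ∈ W} => x.val)) :
    AffineIndependent ℝ (fun x : {x : Fin n → ℝ // x ∈ V} => x.val) := by
  have := hW.comp_embedding
    ⟨fun x : {x : Fin n → ℝ // x ∈ V} => (⟨x.1, hVW x.2⟩ : {x : Fin n → ℝ // x ∈ W}),
      fun x y hxy => by
        apply Subtype.ext
        have : (⟨x.1, hVW x.2⟩ : {x : Fin n → ℝ // x ∈ W}).val =
            (⟨y.1, hVW y.2⟩ : {x : Fin n → ℝ // x ∈ W}).val := congrArg Subtype.val hxy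
        exact this⟩
  exact this

lemma isFaceOf_trans {s u v : Set (Fin n → ℝ)} (h1 : IsFaceOf u s) (h2 : IsFaceOf v u) :
    IsFaceOf v s := by
  obtain ⟨W, V, hWne, hWi, hsW, hVne, hVW, huV⟩ := h1
  obtain ⟨W', V', hW'ne, hW'i, huW', hV'ne, hV'W', hvV'⟩ := h2
  have hVi := affineIndependent_finset_subset hVW hWi
  have hVW' : V = W' := vertex_unique hVi hW'i (huV.symm.trans huW')
  exact ⟨W, V', hWne, hWi, hsW, hV'ne, (hVW' ▸ hV'W').trans hVW, hvV'⟩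

lemma isFaceOf_refl {s : Set (Fin n → ℝ)} (h : IsSimplex s) : IsFaceOf s s := by
  obtain ⟨V, hVne, hVi, hsV⟩ := h
  exact ⟨V, V, hVne, hVi, hsV, hVne, Finset.Subset.refl V, hsV⟩

lemma isFaceOf_subset {s u : Set (Fin n → ℝ)} (h : IsFaceOf u s) : u ⊆ s := by
  obtain ⟨W, V, _, _, hsW, _, hVW, huV⟩ := h
  rw [hsW, huV]
  exact convexHull_mono (by exact_mod_cast hVW)

lemma isSimplex_closed {s : Set (Fin n → ℝ)} (h : IsSimplex s) : IsClosed s := by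
  obtain ⟨V, _, _, hsV⟩ := h
  rw [hsV]
  exact V.finite_toSet.isClosed_convexHull (𝕜 := ℝ)


end Helpers

/-- If `C` and `D` are `K`-definable polyhedra of a triangulation `K`,
then the co-Heyting implication `cl (C \ D)` is again a `K`-definable polyhedron;
consequently the `K`-definable polyhedra form a co-Heyting subalgebra of the closed
subsets of `|K|`. -/
theorem definable_coHeyting {n : ℕ} (K : Set (Set (Fin n → ℝ))) (hK : IsTriangulation K)
    (C D : Set (Fin n → ℝ)) (hC : SigmaDefinable K C) (hD : SigmaDefinable K D) :
    SigmaDefinable K (closure (C \ D)) := by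
  obtain ⟨DC, hDCK, hDCfc, hCeq⟩ := hC
  obtain ⟨DD, hDDK, hDDfc, hDeq⟩ := hD
  set G : Set (Set (Fin n → ℝ)) := {s ∈ DC | ¬ s ⊆ D} with hG
  set E' : Set (Set (Fin n → ℝ)) := {u | ∃ s ∈ G, IsFaceOf u s} with hE'
  have hE'K : E' ⊆ K := by
    rintro u ⟨s, ⟨hsDC, _⟩, hface⟩
    exact hK.face_mem s (hDCK hsDC) u hface
  refine ⟨E', hE'K, ?_, ?_⟩
  · rintro u ⟨s, hsG, hface⟩ t ht
    exact ⟨s, hsG, isFaceOf_trans hface ht⟩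
  · have hGE' : ∀ s ∈ G, s ∈ E' := fun s hs =>
      ⟨s, hs, isFaceOf_refl (hK.simplex s (hDCK hs.1))⟩
    have hUeq : ⋃₀ E' = ⋃₀ G := by
      apply Set.Subset.antisymm
      · rintro x ⟨u, ⟨s, hsG, hface⟩, hxu⟩
        exact ⟨s, hsG, isFaceOf_subset hface hxu⟩
      · rintro x ⟨s, hsG, hxs⟩
        exact ⟨s, hGE' s hsG, hxs⟩
    apply Set.Subset.antisymm
    · -- closure (C \ D) ⊆ ⋃₀ E'
      apply closure_minimal
      · rintro x ⟨hxC, hxD⟩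
        rw [hCeq] at hxC
        obtain ⟨s, hsDC, hxs⟩ := hxC
        rw [hUeq]
        exact ⟨s, ⟨hsDC, fun hsub => hxD (hsub hxs)⟩, hxs⟩
      · rw [Set.sUnion_eq_biUnion]
        exact (hK.finite.subset hE'K).isClosed_biUnion
          (fun u hu => isSimplex_closed (hK.simplex u (hE'K hu)))
    · rw [hUeq]
      rintro x ⟨s, ⟨hsDC, hsD⟩, hxs⟩
      -- show s ⊆ closure (C \ D)
      obtain ⟨W, hWne, hWi, hsW⟩ := hK.simplex s (hDCK hsDC)
      set F : Set (Set (Fin n → ℝ)) := {f | ∃ t ∈ DD, f = s ∩ t ∧ (s ∩ t).Nonempty} with hF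
      have hprop : ∀ f ∈ F, ∃ V : Finset (Fin n → ℝ), V ⊆ W ∧ V ≠ W ∧
          f ⊆ convexHull ℝ (V : Set (Fin n → ℝ)) := by
        rintro f ⟨t, htDD, hfeq, hne⟩
        rcases hK.inter s (hDCK hsDC) t (hDDK htDD) with hempty | ⟨hfs, _⟩
        · exact absurd hempty hne.ne_empty
        · obtain ⟨W2, V2, hW2ne, hW2i, hsW2, hV2ne, hV2W2, hstV2⟩ := hfs
          have hW2W : W2 = W := vertex_unique hW2i hWi (hsW2.symm.trans hsW)
          refine ⟨V2, hW2W ▸ hV2W2, ?_, hfeq ▸ hstV2.subset⟩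
          intro hV2W
          apply hsD
          have : s ∩ t = s := by rw [hstV2, hV2W, ← hsW]
          have hst : s ⊆ t := by rw [← this]; exact Set.inter_subset_right
          exact hst.trans (hDeq ▸ Set.subset_sUnion_of_mem htDD)
      have hdense := dense_compl hWi hWne F hprop
      have hsub : convexHull ℝ (W : Set (Fin n → ℝ)) \ ⋃₀ F ⊆ C \ D := by
        rintro y ⟨hy1, hy2⟩
        constructor
        · rw [hCeq]
          exact ⟨s, hsDC, hsW ▸ hy1⟩
        · intro hyD
          rw [hDeq] at hyD
          obtain ⟨t, htDD, hyt⟩ := hyD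
          exact hy2 ⟨s ∩ t, ⟨t, htDD, rfl, ⟨y, hsW ▸ hy1, hyt⟩⟩, ⟨hsW ▸ hy1, hyt⟩⟩
      have : s ⊆ closure (C \ D) := by
        rw [hsW]
        exact fun y hy => closure_mono hsub (hdense hy)
      exact this hxs
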